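/- Let S : ℝ² → ℝ be C² with ∂²S/∂θ∂Θ ≤ −ε < 0 everywhere and S(θ+1, Θ+1) = S(θ, Θ). Then S(θ,Θ)/|Θ−θ| → +∞ as |Θ−θ| → +∞, uniformly in θ. More precisely, S(θ,Θ) ≥ m − M|Θ−θ| + (ε/2)(Θ−θ)², where m = min_{θ∈[0,1]} S(θ,θ) and M = max_{θ∈[0,1]} |∂S/∂Θ(θ,θ)|. -/

import Mathlib

/-- Coercivity of a generating function: if `S` is C², periodic
(`S(θ+1,Θ+1)=S(θ,Θ)`) and the mixed partial is `≤ -ε < 0`, then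
`S(θ,Θ) ≥ m − M|Θ−θ| + (ε/2)(Θ−θ)²` where `m = min_{[0,1]} S(θ,θ)` and
`M = max_{[0,1]} |∂S/∂Θ(θ,θ)|`; in particular `S(θ,Θ)/|Θ−θ| → +∞` uniformly. -/
theorem stmt1 (S : ℝ × ℝ → ℝ) (ε : ℝ) (hε : 0 < ε) (hS : ContDiff ℝ 2 S)
    (hper : ∀ θ Θ : ℝ, S (θ + 1, Θ + 1) = S (θ, Θ))
    (hmix : ∀ θ Θ : ℝ, deriv (fun t => deriv (fun u => S (t, u)) Θ) θ ≤ -ε)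
    (m M : ℝ)
    (hm : IsLeast ((fun θ => S (θ, θ)) '' Set.Icc (0:ℝ) 1) m)
    (hM : IsGreatest ((fun θ => |deriv (fun u => S (θ, u)) θ|) '' Set.Icc (0:ℝ) 1) M) :
    (∀ θ Θ : ℝ, m - M * |Θ - θ| + (ε/2) * (Θ - θ)^2 ≤ S (θ, Θ)) ∧
    (∀ A : ℝ, ∃ R : ℝ, ∀ θ Θ : ℝ, R ≤ |Θ - θ| → A * |Θ - θ| ≤ S (θ, Θ)) := by
  -- the partial derivative in the second variable
  set P : ℝ → ℝ → ℝ := fun t u => (fderiv ℝ S (t, u)) (0, 1) with hP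
  have hasDerivP : ∀ t u : ℝ, HasDerivAt (fun v => S (t, v)) (P t u) u := by
    intro t u
    have hd : HasFDerivAt S (fderiv ℝ S (t, u)) (t, u) :=
      ((hS.differentiable (by norm_num)) (t, u)).hasFDerivAt
    have hcurve : HasDerivAt (fun v : ℝ => ((t : ℝ), v)) ((0 : ℝ), (1 : ℝ)) u :=
      (hasDerivAt_const u t).prodMk (hasDerivAt_id u)
    exact hd.comp_hasDerivAt u hcurve
  have derivP : ∀ t u : ℝ, deriv (fun v => S (t, v)) u = P t u := fun t u =>
    (hasDerivP t u).deriv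
  -- differentiability of P in the first variable
  have h1 : ContDiff ℝ 1 (fderiv ℝ S) := hS.fderiv_right (by norm_num)
  have hPdiff : ∀ u : ℝ, Differentiable ℝ (fun t => P t u) := by
    intro u
    exact ((h1.differentiable one_ne_zero).comp
      (differentiable_id.prodMk (differentiable_const u))).clm_apply (differentiable_const _)
  -- the mixed-partial bound in terms of P
  have hmix' : ∀ θ u : ℝ, deriv (fun t => P t u) θ ≤ -ε := by
    intro θ u
    have h := hmix θ u
    simp only [derivP] at h
    exact h
  -- comparison of P θ u with P u u
  have hanti : ∀ u : ℝ, Antitone (fun t => P t u + ε * t) := by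
    intro u
    apply antitone_of_deriv_nonpos
    · exact (hPdiff u).add (differentiable_id.const_mul ε)
    · intro t
      have hd : HasDerivAt (fun t => P t u + ε * t) (deriv (fun t => P t u) t + ε) t := by
        have h1 := ((hPdiff u) t).hasDerivAt
        have h2 := (hasDerivAt_id t).const_mul ε
        exact h1.add (by simpa using h2)
      rw [hd.deriv]
      linarith [hmix' t u]
  have hstep : ∀ t u : ℝ, t ≤ u → P u u + ε * (u - t) ≤ P t u := by
    intro t u htu
    have := hanti u htu
    simp only at this
    linarith
  have hstep' : ∀ t u : ℝ, u ≤ t → P t u ≤ P u u + ε * (u - t) := by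
    intro t u htu
    have := hanti u htu
    simp only at this
    linarith
  -- periodicity of the diagonal values
  have hdiagS : Function.Periodic (fun t => S (t, t)) 1 := fun t => hper t t
  have hdiagP : Function.Periodic (fun t => P t t) 1 := by
    intro t
    have h1' : (fun v : ℝ => S (t + 1, v + 1)) = fun v => S (t, v) :=
      funext fun v => hper t v
    calc P (t + 1) (t + 1) = deriv (fun v => S (t + 1, v)) (t + 1) := (derivP _ _).symm
      _ = deriv (fun v => S (t + 1, v + 1)) t := (deriv_comp_add_const _ 1 t).symm
      _ = deriv (fun v => S (t, v)) t := by rw [h1']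
      _ = P t t := derivP t t
  have hfmem : ∀ u : ℝ, Int.fract u ∈ Set.Icc (0 : ℝ) 1 := fun u =>
    ⟨Int.fract_nonneg u, (Int.fract_lt_one u).le⟩
  have key : ∀ (g : ℝ → ℝ), Function.Periodic g 1 → ∀ u : ℝ, g u = g (Int.fract u) := by
    intro g hg u
    have h := hg.sub_int_mul_eq (x := u) ⌊u⌋
    rw [mul_one] at h
    rw [← h]
    rfl
  have hmball : ∀ u : ℝ, m ≤ S (u, u) := by
    intro u
    have h := hm.2 ⟨Int.fract u, hfmem u, rfl⟩
    rw [key (fun t => S (t, t)) hdiagS u]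
    exact h
  have hMball : ∀ u : ℝ, |P u u| ≤ M := by
    intro u
    have h := hM.2 ⟨Int.fract u, hfmem u, rfl⟩
    simp only [derivP] at h
    rw [key (fun t => P t t) hdiagP u]
    exact h
  -- main pointwise bound
  have part1 : ∀ θ Θ : ℝ, m - M * |Θ - θ| + (ε/2) * (Θ - θ)^2 ≤ S (θ, Θ) := by
    intro θ Θ
    rcases le_total θ Θ with hle | hle
    · -- case θ ≤ Θ
      set h : ℝ → ℝ := fun u => S (θ, u) + M * (u - θ) - ε/2 * (u - θ)^2 with hh_def
      have hh : ∀ u : ℝ, HasDerivAt h (P θ u + M - ε * (u - θ)) u := by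
        intro u
        have h1' : HasDerivAt (fun u : ℝ => S (θ, u) + M * (u - θ) - ε/2 * (u - θ)^2)
            (P θ u + M * 1 - ε/2 * ((2 : ℕ) * (u - θ)^1 * 1)) u :=
          ((hasDerivP θ u).add (((hasDerivAt_id u).sub_const θ).const_mul M)).sub
            ((((hasDerivAt_id u).sub_const θ).pow 2).const_mul (ε/2))
        convert h1' using 1
        push_cast
        ring
      have hmono : MonotoneOn h (Set.Icc θ Θ) := by
        apply monotoneOn_of_deriv_nonneg (convex_Icc _ _)
        · exact fun u _ => (hh u).continuousAt.continuousWithinAt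
        · exact fun u _ => (hh u).differentiableAt.differentiableWithinAt
        · intro u hu
          rw [interior_Icc] at hu
          rw [(hh u).deriv]
          have h2 := hstep θ u hu.1.le
          have h3 := neg_abs_le (P u u)
          have h4 := hMball u
          linarith
      have hle2 : h θ ≤ h Θ :=
        hmono (Set.left_mem_Icc.2 hle) (Set.right_mem_Icc.2 hle) hle
      have hmθ := hmball θ
      rw [abs_of_nonneg (sub_nonneg.2 hle)]
      simp only [hh_def] at hle2
      nlinarith [sq_nonneg (Θ - θ)]
    · -- case Θ ≤ θ
      set h : ℝ → ℝ := fun u => S (θ, u) + M * (θ - u) - ε/2 * (θ - u)^2 with hh_def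
      have hh : ∀ u : ℝ, HasDerivAt h (P θ u + M * (-1) - ε * (θ - u) * (-1)) u := by
        intro u
        have h1' : HasDerivAt (fun u : ℝ => S (θ, u) + M * (θ - u) - ε/2 * (θ - u)^2)
            (P θ u + M * (-1) - ε/2 * ((2 : ℕ) * (θ - u)^1 * (-1))) u :=
          ((hasDerivP θ u).add (((hasDerivAt_id u).const_sub θ).const_mul M)).sub
            ((((hasDerivAt_id u).const_sub θ).pow 2).const_mul (ε/2))
        convert h1' using 1
        push_cast
        ring
      have hmono : AntitoneOn h (Set.Icc Θ θ) := by
        apply antitoneOn_of_deriv_nonpos (convex_Icc _ _)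
        · exact fun u _ => (hh u).continuousAt.continuousWithinAt
        · exact fun u _ => (hh u).differentiableAt.differentiableWithinAt
        · intro u hu
          rw [interior_Icc] at hu
          rw [(hh u).deriv]
          have h2 := hstep' θ u hu.2.le
          have h3 := le_abs_self (P u u)
          have h4 := hMball u
          linarith
      have hle2 : h θ ≤ h Θ :=
        hmono (Set.left_mem_Icc.2 hle) (Set.right_mem_Icc.2 hle) hle
      have hmθ := hmball θ
      rw [abs_of_nonpos (sub_nonpos.2 hle)]
      simp only [hh_def] at hle2
      nlinarith [sq_nonneg (Θ - θ)]
  refine ⟨part1, ?_⟩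
  intro A
  refine ⟨max 1 ((2/ε) * (A + M + |m|)), fun θ Θ hR => ?_⟩
  have h1' := part1 θ Θ
  set s := |Θ - θ| with hs
  have hs0 : 0 ≤ s := abs_nonneg _
  have hR1 : (1 : ℝ) ≤ s := le_trans (le_max_left _ _) hR
  have hR2 : (2/ε) * (A + M + |m|) ≤ s := le_trans (le_max_right _ _) hR
  have hsq : (Θ - θ)^2 = s^2 := (sq_abs _).symm
  rw [hsq] at h1'
  have hm' : -|m| ≤ m := neg_abs_le m
  have hεs : 2 * (A + M + |m|) ≤ ε * s := by
    have := mul_le_mul_of_nonneg_left hR2 hε.le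
    calc 2 * (A + M + |m|) = ε * ((2/ε) * (A + M + |m|)) := by
          field_simp
      _ ≤ ε * s := this
  nlinarith [mul_le_mul_of_nonneg_left hεs hs0, mul_nonneg (sub_nonneg.2 hR1) (abs_nonneg m),
    abs_nonneg m]
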